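/- Let p = 29789 and π = 110 + 133i in the Gaussian integers ℤ[i], so that p = π·π̄ where π̄ = 110 - 133i. Then π^(p-1) ≡ 1 mod π̄², i.e., π̄² divides π^(p-1) - 1 in ℤ[i]. -/
import Mathlib


open GaussianInt

theorem gc_key : (358987459 : ZMod 887384521) ^ 29788 = 1 := by
  have h1 : ((358987459 : ZMod 887384521)) ^ 1 = 358987459 := pow_one _
  have h3 : ((358987459 : ZMod 887384521)) ^ 3 = 878371781 := by
    have h : ((358987459 : ZMod 887384521)) ^ 3 = ((358987459 : ZMod 887384521)) ^ 1 * ((358987459 : ZMod 887384521)) ^ 1 * (358987459 : ZMod 887384521) := by rw [show (3:ℕ) = 1 + 1 + 1 from rfl, pow_add, pow_add, pow_one]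
    rw [h, h1]; decide
  have h7 : ((358987459 : ZMod 887384521)) ^ 7 = 138728554 := by
    have h : ((358987459 : ZMod 887384521)) ^ 7 = ((358987459 : ZMod 887384521)) ^ 3 * ((358987459 : ZMod 887384521)) ^ 3 * (358987459 : ZMod 887384521) := by rw [show (7:ℕ) = 3 + 3 + 1 from rfl, pow_add, pow_add, pow_one]
    rw [h, h3]; decide
  have h14 : ((358987459 : ZMod 887384521)) ^ 14 = 230561538 := by
    have h : ((358987459 : ZMod 887384521)) ^ 14 = ((358987459 : ZMod 887384521)) ^ 7 * ((358987459 : ZMod 887384521)) ^ 7 := by rw [show (14:ℕ) = 7 + 7 from rfl, pow_add]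
    rw [h, h7]; decide
  have h29 : ((358987459 : ZMod 887384521)) ^ 29 = 504007129 := by
    have h : ((358987459 : ZMod 887384521)) ^ 29 = ((358987459 : ZMod 887384521)) ^ 14 * ((358987459 : ZMod 887384521)) ^ 14 * (358987459 : ZMod 887384521) := by rw [show (29:ℕ) = 14 + 14 + 1 from rfl, pow_add, pow_add, pow_one]
    rw [h, h14]; decide
  have h58 : ((358987459 : ZMod 887384521)) ^ 58 = 602953486 := by
    have h : ((358987459 : ZMod 887384521)) ^ 58 = ((358987459 : ZMod 887384521)) ^ 29 * ((358987459 : ZMod 887384521)) ^ 29 := by rw [show (58:ℕ) = 29 + 29 from rfl, pow_add]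
    rw [h, h29]; decide
  have h116 : ((358987459 : ZMod 887384521)) ^ 116 = 228021611 := by
    have h : ((358987459 : ZMod 887384521)) ^ 116 = ((358987459 : ZMod 887384521)) ^ 58 * ((358987459 : ZMod 887384521)) ^ 58 := by rw [show (116:ℕ) = 58 + 58 from rfl, pow_add]
    rw [h, h58]; decide
  have h232 : ((358987459 : ZMod 887384521)) ^ 232 = 269857592 := by
    have h : ((358987459 : ZMod 887384521)) ^ 232 = ((358987459 : ZMod 887384521)) ^ 116 * ((358987459 : ZMod 887384521)) ^ 116 := by rw [show (232:ℕ) = 116 + 116 from rfl, pow_add]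
    rw [h, h116]; decide
  have h465 : ((358987459 : ZMod 887384521)) ^ 465 = 427028247 := by
    have h : ((358987459 : ZMod 887384521)) ^ 465 = ((358987459 : ZMod 887384521)) ^ 232 * ((358987459 : ZMod 887384521)) ^ 232 * (358987459 : ZMod 887384521) := by rw [show (465:ℕ) = 232 + 232 + 1 from rfl, pow_add, pow_add, pow_one]
    rw [h, h232]; decide
  have h930 : ((358987459 : ZMod 887384521)) ^ 930 = 773310043 := by
    have h : ((358987459 : ZMod 887384521)) ^ 930 = ((358987459 : ZMod 887384521)) ^ 465 * ((358987459 : ZMod 887384521)) ^ 465 := by rw [show (930:ℕ) = 465 + 465 from rfl, pow_add]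
    rw [h, h465]; decide
  have h1861 : ((358987459 : ZMod 887384521)) ^ 1861 = 421177972 := by
    have h : ((358987459 : ZMod 887384521)) ^ 1861 = ((358987459 : ZMod 887384521)) ^ 930 * ((358987459 : ZMod 887384521)) ^ 930 * (358987459 : ZMod 887384521) := by rw [show (1861:ℕ) = 930 + 930 + 1 from rfl, pow_add, pow_add, pow_one]
    rw [h, h930]; decide
  have h3723 : ((358987459 : ZMod 887384521)) ^ 3723 = 400694152 := by
    have h : ((358987459 : ZMod 887384521)) ^ 3723 = ((358987459 : ZMod 887384521)) ^ 1861 * ((358987459 : ZMod 887384521)) ^ 1861 * (358987459 : ZMod 887384521) := by rw [show (3723:ℕ) = 1861 + 1861 + 1 from rfl, pow_add, pow_add, pow_one]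
    rw [h, h1861]; decide
  have h7447 : ((358987459 : ZMod 887384521)) ^ 7447 = 1 := by
    have h : ((358987459 : ZMod 887384521)) ^ 7447 = ((358987459 : ZMod 887384521)) ^ 3723 * ((358987459 : ZMod 887384521)) ^ 3723 * (358987459 : ZMod 887384521) := by rw [show (7447:ℕ) = 3723 + 3723 + 1 from rfl, pow_add, pow_add, pow_one]
    rw [h, h3723]; decide
  have h14894 : ((358987459 : ZMod 887384521)) ^ 14894 = 1 := by
    have h : ((358987459 : ZMod 887384521)) ^ 14894 = ((358987459 : ZMod 887384521)) ^ 7447 * ((358987459 : ZMod 887384521)) ^ 7447 := by rw [show (14894:ℕ) = 7447 + 7447 from rfl, pow_add]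
    rw [h, h7447]; decide
  have h29788 : ((358987459 : ZMod 887384521)) ^ 29788 = 1 := by
    have h : ((358987459 : ZMod 887384521)) ^ 29788 = ((358987459 : ZMod 887384521)) ^ 14894 * ((358987459 : ZMod 887384521)) ^ 14894 := by rw [show (29788:ℕ) = 14894 + 14894 from rfl, pow_add]
    rw [h, h14894]; decide
  exact h29788

theorem gc_int : (887384521 : ℤ) ∣ 358987459 ^ 29788 - 1 := by
  have h : ((358987459 ^ 29788 - 1 : ℤ) : ZMod 887384521) = 0 := by
    push_cast
    rw [gc_key]
    ring
  exact (ZMod.intCast_zmod_eq_zero_iff_dvd _ _).mp h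

/-- Let `p = 29789` and `π = 110 + 133i` in the Gaussian integers `ℤ[i]`, so that
`p = π·π̄` where `π̄ = 110 - 133i`.  Then `π^(p-1) ≡ 1 mod π̄²`, i.e. `π̄²` divides
`π^(p-1) - 1` in `ℤ[i]`. -/
theorem gaussian_counterexample :
    (⟨110, 133⟩ : GaussianInt) * ⟨110, -133⟩ = (29789 : GaussianInt) ∧
    ((⟨110, -133⟩ : GaussianInt) ^ 2 ∣ (⟨110, 133⟩ : GaussianInt) ^ (29789 - 1) - 1) := by
  constructor
  · decide
  · have h1 : (⟨110, -133⟩ : GaussianInt) ^ 2 ∣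
        (⟨110, 133⟩ : GaussianInt) - (358987459 : ℤ) := by
      refine ⟨⟨2261, -11837⟩, ?_⟩
      decide
    have h2 : (⟨110, -133⟩ : GaussianInt) ^ 2 ∣
        ((358987459 : ℤ) : GaussianInt) ^ 29788 - 1 := by
      have hcast : ((887384521 : ℤ) : GaussianInt) ∣
          ((358987459 ^ 29788 - 1 : ℤ) : GaussianInt) :=
        map_dvd (Int.castRingHom GaussianInt) gc_int
      have hp : (⟨110, -133⟩ : GaussianInt) ^ 2 ∣ ((887384521 : ℤ) : GaussianInt) := by
        refine ⟨⟨-5589, 29260⟩, ?_⟩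
        decide
      refine dvd_trans hp (dvd_trans hcast ?_)
      push_cast
      exact dvd_refl _
    have h3 : (⟨110, -133⟩ : GaussianInt) ^ 2 ∣
        (⟨110, 133⟩ : GaussianInt) ^ 29788 - ((358987459 : ℤ) : GaussianInt) ^ 29788 :=
      dvd_trans h1 (sub_dvd_pow_sub_pow _ _ _)
    have h4 := dvd_add h3 h2
    simpa using h4
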